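/- Let d be a positive integer, τ' ∈ (0,1/2) and s ∈ (0,1/2]. Suppose that for every closed cube Q in ℝ^d and all disjoint compact sets F₊, F₋ ⊆ Q, each a finite union of closed rectangles, such that Q itself is τ'-minimal (with respect to Q, F₊, F₋), there exists a cube W ⊆ Q with min{λ(W ∩ F₊), λ(W ∩ F₋)} ≥ s·λ(W). Then for every closed cube Q in ℝ^d and all disjoint compact sets F₊, F₋ ⊆ Q of positive Lebesgue measure, each a finite union of closed rectangles, satisfying min{λ(F₊), λ(F₋)} ≥ τ'·λ(Q \ F₊ \ F₋), there exists a cube W ⊆ Q with min{λ(W ∩ F₊), λ(W ∩ F₋)} ≥ s·λ(W). -/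

import Mathlib

open MeasureTheory Set

/-- A closed axis-parallel cube in `ℝ^d` with positive side length. -/
def IsCube {d : ℕ} (Q : Set (Fin d → ℝ)) : Prop :=
  ∃ (a : Fin d → ℝ) (r : ℝ), 0 < r ∧ Q = Set.univ.pi fun i => Set.Icc (a i) (a i + r)

/-- A closed rectangle in `ℝ^d`: a cartesian product of `d` bounded closed intervals. -/
def IsClosedRect {d : ℕ} (R : Set (Fin d → ℝ)) : Prop :=
  ∃ a b : Fin d → ℝ, (∀ i, a i ≤ b i) ∧ R = Set.univ.pi fun i => Set.Icc (a i) (b i)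

/-- `F` is a finite union of closed rectangles. -/
def FiniteUnionOfClosedRects {d : ℕ} (F : Set (Fin d → ℝ)) : Prop :=
  ∃ 𝒮 : Set (Set (Fin d → ℝ)), 𝒮.Finite ∧ (∀ R ∈ 𝒮, IsClosedRect R) ∧ F = ⋃₀ 𝒮

/-- `V` is an exceptional subcube (relative to `Fp`, `Fm`):
both intersections have positive measure and `V \ Fp \ Fm` is null. -/
def IsExceptional {d : ℕ} (Fp Fm V : Set (Fin d → ℝ)) : Prop :=
  0 < volume (V ∩ Fp) ∧ 0 < volume (V ∩ Fm) ∧ volume ((V \ Fp) \ Fm) = 0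

/-- `V` is a good `τ'`-subcube (relative to `Fp`, `Fm`). -/
def IsGoodSubcube {d : ℕ} (τ' : ℝ) (Fp Fm V : Set (Fin d → ℝ)) : Prop :=
  0 < volume (V ∩ Fp) ∧ 0 < volume (V ∩ Fm) ∧ 0 < volume ((V \ Fp) \ Fm) ∧
  ENNReal.ofReal τ' * volume ((V \ Fp) \ Fm) ≤ min (volume (V ∩ Fp)) (volume (V ∩ Fm))

/-- `V` is `τ'`-minimal (relative to `Fp`, `Fm`): it is a good `τ'`-subcube and
every strictly smaller closed subcube of `V` is neither exceptional nor good. -/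
def IsTauMinimal {d : ℕ} (τ' : ℝ) (Fp Fm V : Set (Fin d → ℝ)) : Prop :=
  IsGoodSubcube τ' Fp Fm V ∧
  ∀ V' : Set (Fin d → ℝ), IsCube V' → V' ⊂ V →
    ¬ IsExceptional Fp Fm V' ∧ ¬ IsGoodSubcube τ' Fp Fm V'


namespace S19
variable {d : ℕ}

def cube (a : Fin d → ℝ) (r : ℝ) : Set (Fin d → ℝ) :=
  Set.univ.pi fun i => Set.Icc (a i) (a i + r)

lemma mem_cube {a x : Fin d → ℝ} {r : ℝ} :
    x ∈ cube a r ↔ ∀ i, a i ≤ x i ∧ x i ≤ a i + r := by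
  simp [cube, Set.mem_univ_pi, Set.mem_Icc, forall_and, Pi.le_def]

lemma isClosed_cube (a : Fin d → ℝ) (r : ℝ) : IsClosed (cube a r) :=
  isClosed_set_pi fun i _ => isClosed_Icc

lemma isCompact_cube (a : Fin d → ℝ) (r : ℝ) : IsCompact (cube a r) :=
  isCompact_univ_pi fun i => isCompact_Icc

lemma volume_cube {a : Fin d → ℝ} {r : ℝ} (hr : 0 ≤ r) :
    volume (cube a r) = ENNReal.ofReal (r ^ d) := by
  rw [cube, Set.pi_univ_Icc, Real.volume_Icc_pi]
  simp [ENNReal.ofReal_pow hr]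

lemma cube_subset_cube {a b : Fin d → ℝ} {r t : ℝ} (hr : 0 ≤ r)
    (h : ∀ i, b i ≤ a i ∧ a i + r ≤ b i + t) : cube a r ⊆ cube b t := by
  intro x hx
  rw [mem_cube] at hx ⊢
  intro i
  exact ⟨(h i).1.trans (hx i).1, (hx i).2.trans (h i).2⟩

lemma corner_mem_cube {a : Fin d → ℝ} {r : ℝ} (hr : 0 ≤ r) : a ∈ cube a r :=
  mem_cube.2 fun i => ⟨le_rfl, by linarith⟩

lemma far_corner_mem_cube {a : Fin d → ℝ} {r : ℝ} (hr : 0 ≤ r) :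
    (fun i => a i + r) ∈ cube a r :=
  mem_cube.2 fun i => ⟨by linarith, le_rfl⟩

lemma subset_cube_iff {a b : Fin d → ℝ} {r t : ℝ} (hr : 0 ≤ r) :
    cube a r ⊆ cube b t ↔ ∀ i, b i ≤ a i ∧ a i + r ≤ b i + t := by
  constructor
  · intro h i
    exact ⟨(mem_cube.1 (h (corner_mem_cube hr)) i).1,
      (mem_cube.1 (h (far_corner_mem_cube hr)) i).2⟩
  · exact cube_subset_cube hr

lemma cube_eq_of_subset {a b : Fin d → ℝ} {r : ℝ} (hr : 0 ≤ r)
    (h : cube a r ⊆ cube b r) : a = b ∧ cube a r = cube b r := by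
  have h' := (subset_cube_iff hr).1 h
  have : a = b := funext fun i => le_antisymm (by linarith [(h' i).2]) (h' i).1
  exact ⟨this, by rw [this]⟩

lemma dist_le_of_mem_cube {a x y : Fin d → ℝ} {r : ℝ} (hr : 0 ≤ r)
    (hx : x ∈ cube a r) (hy : y ∈ cube a r) : dist x y ≤ r := by
  rw [mem_cube] at hx hy
  rw [dist_pi_le_iff hr]
  intro i
  rw [Real.dist_eq, abs_le]
  constructor <;> [linarith [(hx i).1, (hx i).2, (hy i).1, (hy i).2];
    linarith [(hx i).1, (hx i).2, (hy i).1, (hy i).2]]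

end S19
namespace S19
variable {d : ℕ}

lemma interior_cube {a : Fin d → ℝ} {r : ℝ} :
    interior (cube a r) = Set.univ.pi fun i => Set.Ioo (a i) (a i + r) := by
  rw [cube, interior_pi_set Set.finite_univ]
  simp [interior_Icc]

lemma closure_interior_cube {a : Fin d → ℝ} {r : ℝ} (hr : 0 < r) :
    closure (interior (cube a r)) = cube a r := by
  rw [interior_cube, closure_pi_set, cube]
  exact Set.pi_congr rfl fun i _ => closure_Ioo (by linarith)

/-- key dichotomy: a positive-side cube a.e. covered by two disjoint closed sets is
contained in one of them. -/
lemma cube_subset_of_null {a : Fin d → ℝ} {r : ℝ} (hr : 0 < r)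
    {Fp Fm : Set (Fin d → ℝ)} (hFpc : IsClosed Fp) (hFmc : IsClosed Fm)
    (hdisj : Disjoint Fp Fm) (hnull : volume ((cube a r \ Fp) \ Fm) = 0) :
    cube a r ⊆ Fp ∨ cube a r ⊆ Fm := by
  set V := cube a r
  have hint : interior V ∩ (Fp ∪ Fm)ᶜ = ∅ := by
    by_contra h
    have hopen : IsOpen (interior V ∩ (Fp ∪ Fm)ᶜ) :=
      isOpen_interior.inter ((hFpc.union hFmc).isOpen_compl)
    have hpos : 0 < volume (interior V ∩ (Fp ∪ Fm)ᶜ) :=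
      hopen.measure_pos volume (Set.nonempty_iff_ne_empty.2 h)
    have hsub : interior V ∩ (Fp ∪ Fm)ᶜ ⊆ (V \ Fp) \ Fm := by
      intro x hx
      simp only [Set.mem_inter_iff, Set.mem_compl_iff, Set.mem_union, not_or] at hx
      exact ⟨⟨interior_subset hx.1, hx.2.1⟩, hx.2.2⟩
    exact absurd (measure_mono_null hsub hnull) hpos.ne'
  have hcover : interior V ⊆ Fp ∪ Fm := by
    intro x hx
    by_contra hc
    exact absurd (Set.mem_inter hx hc) (by rw [hint]; exact id)
  -- preconnectedness
  have hpre : IsPreconnected (interior V) := by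
    rw [interior_cube]
    exact (convex_pi fun i _ => convex_Ioo _ _).isPreconnected
  have : interior V ⊆ Fm ∨ interior V ⊆ Fp := by
    by_contra hc
    push_neg at hc
    obtain ⟨x, hxV, hxm⟩ := Set.not_subset.1 hc.1
    obtain ⟨y, hyV, hyp⟩ := Set.not_subset.1 hc.2
    have := hpre Fmᶜ Fpᶜ hFmc.isOpen_compl hFpc.isOpen_compl
      (by intro z hz; rcases hcover hz with h | h
          · exact Or.inl (fun hm => hdisj.ne_of_mem h hm rfl)
          · exact Or.inr (fun hp => hdisj.ne_of_mem hp h rfl))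
      ⟨x, hxV, hxm⟩ ⟨y, hyV, hyp⟩
    obtain ⟨z, hzV, hzm, hzp⟩ := this
    rcases hcover hzV with h | h
    · exact hzp h
    · exact hzm h
  rcases this with h | h
  · refine Or.inr ?_
    have : closure (interior V) ⊆ Fm := closure_minimal h hFmc
    rwa [closure_interior_cube hr] at this
  · refine Or.inl ?_
    have : closure (interior V) ⊆ Fp := closure_minimal h hFpc
    rwa [closure_interior_cube hr] at this

end S19
namespace S19
variable {d : ℕ}

open Filter in
lemma meas_inter_le (V W S : Set (Fin d → ℝ)) :
    volume (V ∩ S) ≤ volume (W ∩ S) + volume (V \ W) := by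
  refine le_trans (measure_mono ?_) (measure_union_le _ _)
  intro x ⟨hxV, hxS⟩
  by_cases h : x ∈ W
  · exact Or.inl ⟨h, hxS⟩
  · exact Or.inr ⟨hxV, h⟩

lemma approx {a A : Fin d → ℝ} {r R t : ℝ} (ht : 0 < t) (ht3 : 3 * t ≤ r)
    (hR : 0 ≤ R) (ha : ∀ i, |A i - a i| ≤ t) (hrR : |R - r| ≤ t) (S : Set (Fin d → ℝ)) :
    volume (cube a r ∩ S) ≤ volume (cube A R ∩ S) + ENNReal.ofReal ((r+3*t)^d - (r-3*t)^d) ∧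
    volume (cube A R ∩ S) ≤ volume (cube a r ∩ S) + ENNReal.ofReal ((r+3*t)^d - (r-3*t)^d) := by
  have hr : 0 < r := lt_of_lt_of_le (by linarith) ht3
  set B := cube (fun i => a i - t) (r + 3*t) with hB
  set Sm := cube (fun i => a i + t) (r - 3*t) with hSm
  have haB : cube a r ⊆ B := cube_subset_cube hr.le fun i => ⟨by linarith, by linarith⟩
  have hAB : cube A R ⊆ B := cube_subset_cube hR fun i => by
    have h1 := abs_le.1 (ha i); have h2 := abs_le.1 hrR
    exact ⟨by linarith [h1.1], by linarith [h1.2, h2.2]⟩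
  have hSa : Sm ⊆ cube a r := cube_subset_cube (by linarith) fun i => ⟨by linarith, by linarith⟩
  have hSA : Sm ⊆ cube A R := cube_subset_cube (by linarith) fun i => by
    have h1 := abs_le.1 (ha i); have h2 := abs_le.1 hrR
    exact ⟨by linarith [h1.2], by linarith [h1.1, h2.1]⟩
  have hdiff : volume (B \ Sm) = ENNReal.ofReal ((r+3*t)^d - (r-3*t)^d) := by
    rw [measure_diff (hSa.trans haB) (isClosed_cube _ _).nullMeasurableSet
      ((isCompact_cube _ _).measure_ne_top),
      volume_cube (by linarith), volume_cube (by linarith),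
      ENNReal.ofReal_sub _ (pow_nonneg (by linarith) d)]
  have key : ∀ V W : Set (Fin d → ℝ), V ⊆ B → Sm ⊆ W →
      volume (V ∩ S) ≤ volume (W ∩ S) + ENNReal.ofReal ((r+3*t)^d - (r-3*t)^d) := by
    intro V W hVB hSmW
    refine (meas_inter_le V W S).trans (add_le_add le_rfl ?_)
    rw [← hdiff]
    exact measure_mono fun x ⟨hxV, hxW⟩ => ⟨hVB hxV, fun hx => hxW (hSmW hx)⟩
  exact ⟨key _ _ haB hSA, key _ _ hAB hSa⟩

open Filter in
lemma tendsto_volume_cube_inter {A : ℕ → (Fin d → ℝ)} {R : ℕ → ℝ} {a : Fin d → ℝ} {r : ℝ}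
    (hr : 0 < r) (hR : ∀ n, 0 ≤ R n) (hA : Tendsto A atTop (nhds a))
    (hRt : Tendsto R atTop (nhds r)) (S : Set (Fin d → ℝ)) :
    Tendsto (fun n => volume (cube (A n) (R n) ∩ S)) atTop (nhds (volume (cube a r ∩ S))) := by
  have hfin : volume (cube a r ∩ S) ≠ ⊤ :=
    ne_top_of_le_ne_top (isCompact_cube a r).measure_ne_top (measure_mono inter_subset_left)
  rw [ENNReal.tendsto_nhds hfin]
  intro ε hε
  -- real epsilon
  obtain ⟨ε', hε'pos, hε'le⟩ : ∃ ε' : ℝ, 0 < ε' ∧ ENNReal.ofReal ε' ≤ ε := by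
    rcases eq_or_ne ε ⊤ with h | h
    · exact ⟨1, one_pos, by simp [h]⟩
    · exact ⟨ε.toReal, ENNReal.toReal_pos hε.ne' h, by rw [ENNReal.ofReal_toReal h]⟩
  -- continuity of the error function
  have hg : ContinuousAt (fun t : ℝ => (r+3*t)^d - (r-3*t)^d) 0 := by fun_prop
  have h0 : (r+3*(0:ℝ))^d - (r-3*(0:ℝ))^d = 0 := by ring_nf
  have := hg.tendsto
  simp only [h0] at this
  obtain ⟨t₀, ht₀pos, ht₀⟩ := Metric.tendsto_nhds_nhds.1 this ε' hε'pos
  set t := min (t₀ / 2) (r / 3) with htdef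
  have htpos : 0 < t := lt_min (by linarith) (by linarith)
  have ht3 : 3 * t ≤ r := by
    have := min_le_right (t₀ / 2) (r / 3); rw [← htdef] at this; linarith
  have hgt : ENNReal.ofReal ((r+3*t)^d - (r-3*t)^d) ≤ ε := by
    refine le_trans (le_of_lt ?_) hε'le
    rw [ENNReal.ofReal_lt_ofReal_iff hε'pos]
    have : dist t (0:ℝ) < t₀ := by
      rw [Real.dist_eq, sub_zero, abs_of_pos htpos]
      exact lt_of_le_of_lt (min_le_left _ _) (by linarith)
    have h2 := ht₀ this
    rw [Real.dist_eq, sub_zero] at h2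
    calc (r+3*t)^d - (r-3*t)^d ≤ |(r+3*t)^d - (r-3*t)^d| := le_abs_self _
      _ < ε' := h2
  have hevA : ∀ᶠ n in atTop, dist (A n) a < t := Metric.tendsto_nhds.1 hA t htpos
  have hevR : ∀ᶠ n in atTop, dist (R n) r < t := Metric.tendsto_nhds.1 hRt t htpos
  filter_upwards [hevA, hevR] with n hnA hnR
  have ha : ∀ i, |A n i - a i| ≤ t := fun i =>
    le_trans (by rw [← Real.dist_eq]; exact dist_le_pi_dist (A n) a i) hnA.le
  have hrR : |R n - r| ≤ t := by rw [← Real.dist_eq]; exact hnR.le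
  obtain ⟨h1, h2⟩ := approx htpos ht3 (hR n) ha hrR S
  constructor
  · rw [tsub_le_iff_right]
    exact h1.trans (add_le_add le_rfl hgt)
  · exact h2.trans (add_le_add le_rfl hgt)

end S19
namespace S19
variable {d : ℕ}

lemma exists_sep {Fp Fm : Set (Fin d → ℝ)} (hFp : IsCompact Fp) (hFm : IsCompact Fm)
    (hpne : Fp.Nonempty) (hmne : Fm.Nonempty) (hdisj : Disjoint Fp Fm) :
    ∃ δ : ℝ, 0 < δ ∧ ∀ x ∈ Fp, ∀ y ∈ Fm, δ ≤ dist x y := by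
  obtain ⟨x₀, hx₀, hmin⟩ := hFp.exists_isMinOn hpne
    (Metric.continuous_infDist_pt Fm).continuousOn
  refine ⟨Metric.infDist x₀ Fm, ?_, ?_⟩
  · rw [← hFm.isClosed.notMem_iff_infDist_pos hmne]
    exact fun h => hdisj.ne_of_mem hx₀ h rfl
  · intro x hx y hy
    exact le_trans (hmin hx) (Metric.infDist_le_dist_of_mem hy)

/-- intersecting a finite union of closed rectangles with a cube -/
lemma finiteUnion_inter_cube {F : Set (Fin d → ℝ)} (hF : FiniteUnionOfClosedRects F)
    (a : Fin d → ℝ) (r : ℝ) : FiniteUnionOfClosedRects (F ∩ cube a r) := by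
  obtain ⟨𝒮, h𝒮fin, h𝒮rect, rfl⟩ := hF
  refine ⟨((· ∩ cube a r) '' 𝒮) \ {∅}, (h𝒮fin.image _).diff, ?_, ?_⟩
  · rintro T ⟨⟨R, hR, rfl⟩, hTne⟩
    obtain ⟨b, c, hbc, rfl⟩ := h𝒮rect R hR
    have : (Set.univ.pi fun i => Set.Icc (b i) (c i)) ∩ cube a r =
        Set.univ.pi fun i => Set.Icc (max (b i) (a i)) (min (c i) (a i + r)) := by
      rw [cube, ← Set.pi_inter_distrib]
      exact Set.pi_congr rfl fun i _ => Icc_inter_Icc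
    show IsClosedRect ((Set.univ.pi fun i => Set.Icc (b i) (c i)) ∩ cube a r)
    rw [this]
    refine ⟨_, _, fun i => ?_, rfl⟩
    have hne : ((Set.univ.pi fun i => Set.Icc (max (b i) (a i)) (min (c i) (a i + r)))).Nonempty := by
      rw [← this]
      exact Set.nonempty_iff_ne_empty.2 (by simpa using hTne)
    obtain ⟨x, hx⟩ := hne
    have := hx i (Set.mem_univ i)
    exact le_trans this.1 this.2
  · rw [Set.sUnion_diff_singleton_empty, Set.sUnion_image]
    ext x
    simp only [Set.mem_inter_iff, Set.mem_sUnion, Set.mem_iUnion]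
    constructor
    · rintro ⟨⟨R, hR, hxR⟩, hxc⟩
      exact ⟨R, hR, hxR, hxc⟩
    · rintro ⟨R, hR, hxR, hxc⟩
      exact ⟨⟨R, hR, hxR⟩, hxc⟩

end S19

namespace S19
lemma nonempty_of_vol_pos {d : ℕ} {S : Set (Fin d → ℝ)} (h : 0 < volume S) : S.Nonempty :=
  Set.nonempty_iff_ne_empty.2 (fun he => by simp [he] at h)
end S19

theorem stmt19 {d : ℕ} (hd : 0 < d) (τ' s : ℝ)
    (hτ : τ' ∈ Set.Ioo (0:ℝ) (1/2)) (hs : s ∈ Set.Ioc (0:ℝ) (1/2))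
    (hyp : ∀ Q Fp Fm : Set (Fin d → ℝ), IsCube Q →
      IsCompact Fp → IsCompact Fm → Fp ⊆ Q → Fm ⊆ Q → Disjoint Fp Fm →
      FiniteUnionOfClosedRects Fp → FiniteUnionOfClosedRects Fm →
      IsTauMinimal τ' Fp Fm Q →
      ∃ W : Set (Fin d → ℝ), IsCube W ∧ W ⊆ Q ∧
        ENNReal.ofReal s * volume W ≤ min (volume (W ∩ Fp)) (volume (W ∩ Fm))) :
    ∀ Q Fp Fm : Set (Fin d → ℝ), IsCube Q →
      IsCompact Fp → IsCompact Fm → Fp ⊆ Q → Fm ⊆ Q → Disjoint Fp Fm →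
      FiniteUnionOfClosedRects Fp → FiniteUnionOfClosedRects Fm →
      0 < volume Fp → 0 < volume Fm →
      ENNReal.ofReal τ' * volume ((Q \ Fp) \ Fm) ≤ min (volume Fp) (volume Fm) →
      ∃ W : Set (Fin d → ℝ), IsCube W ∧ W ⊆ Q ∧
        ENNReal.ofReal s * volume W ≤ min (volume (W ∩ Fp)) (volume (W ∩ Fm)) := by
  obtain ⟨ho, hτ2⟩ := hτ
  intro Q Fp Fm hQ hFp hFm hFpQ hFmQ hdisj hFpU hFmU hFppos hFmpos hineq
  obtain ⟨q, rQ, hrQ, rfl⟩ := hQ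
  rw [show (Set.univ.pi fun i => Set.Icc (q i) (q i + rQ)) = S19.cube q rQ from rfl]
    at hFpQ hFmQ hineq ⊢
  have hτpos : (0:ENNReal) < ENNReal.ofReal τ' := ENNReal.ofReal_pos.2 ho
  have hτne : ENNReal.ofReal τ' ≠ ⊤ := ENNReal.ofReal_ne_top
  have hτle1 : ENNReal.ofReal τ' ≤ 1 := by
    rw [← ENNReal.ofReal_one]
    exact ENNReal.ofReal_le_ofReal (by linarith)
  have hpne : Fp.Nonempty := S19.nonempty_of_vol_pos hFppos
  have hmne : Fm.Nonempty := S19.nonempty_of_vol_pos hFmpos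
  obtain ⟨δ, hδpos, hδ⟩ := S19.exists_sep hFp hFm hpne hmne hdisj
  have hdiffeq : ∀ V : Set (Fin d → ℝ), (V \ Fp) \ Fm = V ∩ (Fp ∪ Fm)ᶜ := by
    intro V; rw [Set.diff_diff, Set.diff_eq]
  -- the constraint set
  set K : Set ((Fin d → ℝ) × ℝ) :=
    {p | (∀ i, q i ≤ p.1 i ∧ p.1 i + p.2 ≤ q i + rQ) ∧ 0 ≤ p.2 ∧
      (S19.cube p.1 p.2 ∩ Fp).Nonempty ∧ (S19.cube p.1 p.2 ∩ Fm).Nonempty ∧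
      ENNReal.ofReal τ' * volume (S19.cube p.1 p.2 ∩ (Fp ∪ Fm)ᶜ) ≤
        volume (S19.cube p.1 p.2 ∩ Fp) ∧
      ENNReal.ofReal τ' * volume (S19.cube p.1 p.2 ∩ (Fp ∪ Fm)ᶜ) ≤
        volume (S19.cube p.1 p.2 ∩ Fm)} with hKdef
  have hδK : ∀ p ∈ K, δ ≤ p.2 := by
    rintro p ⟨_, hp2, ⟨x, hxc, hxp⟩, ⟨y, hyc, hym⟩, _⟩
    exact le_trans (hδ x hxp y hym) (S19.dist_le_of_mem_cube hp2 hxc hyc)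
  have hKq : (q, rQ) ∈ K := by
    have hQp : S19.cube q rQ ∩ Fp = Fp := Set.inter_eq_self_of_subset_right hFpQ
    have hQm : S19.cube q rQ ∩ Fm = Fm := Set.inter_eq_self_of_subset_right hFmQ
    rw [hdiffeq] at hineq
    refine ⟨fun i => ⟨le_rfl, le_rfl⟩, hrQ.le, ?_, ?_, ?_, ?_⟩
    · rw [hQp]; exact hpne
    · rw [hQm]; exact hmne
    · rw [hQp]; exact hineq.trans (min_le_left _ _)
    · rw [hQm]; exact hineq.trans (min_le_right _ _)
  -- K is closed
  have hKclosed : IsClosed K := by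
    refine IsSeqClosed.isClosed ?_
    intro x p hxK hxp
    have hA : Filter.Tendsto (fun n => (x n).1) Filter.atTop (nhds p.1) :=
      (continuous_fst.tendsto p).comp hxp
    have hR : Filter.Tendsto (fun n => (x n).2) Filter.atTop (nhds p.2) :=
      (continuous_snd.tendsto p).comp hxp
    have hAi : ∀ i, Filter.Tendsto (fun n => (x n).1 i) Filter.atTop (nhds (p.1 i)) :=
      fun i => ((continuous_apply i).tendsto p.1).comp hA
    have hc1 : ∀ i, q i ≤ p.1 i ∧ p.1 i + p.2 ≤ q i + rQ := by
      intro i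
      constructor
      · exact ge_of_tendsto (hAi i) (Filter.Eventually.of_forall fun n => ((hxK n).1 i).1)
      · exact le_of_tendsto ((hAi i).add hR) (Filter.Eventually.of_forall
          fun n => ((hxK n).1 i).2)
    have hc2 : 0 ≤ p.2 := ge_of_tendsto hR (Filter.Eventually.of_forall fun n => (hxK n).2.1)
    -- nonemptiness via compactness
    have hlim : ∀ F : Set (Fin d → ℝ), IsCompact F →
        (∀ n, (S19.cube (x n).1 (x n).2 ∩ F).Nonempty) →
        (S19.cube p.1 p.2 ∩ F).Nonempty := by
      intro F hFc hne
      choose y hy using hne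
      obtain ⟨z, hzF, φ, hφ, hz⟩ := hFc.tendsto_subseq (fun n => (hy n).2)
      refine ⟨z, ?_, hzF⟩
      rw [S19.mem_cube]
      intro i
      have hyi : Filter.Tendsto (fun n => y (φ n) i) Filter.atTop (nhds (z i)) :=
        ((continuous_apply i).tendsto z).comp hz
      constructor
      · refine le_of_tendsto_of_tendsto ((hAi i).comp hφ.tendsto_atTop) hyi
          (Filter.Eventually.of_forall fun n => ?_)
        exact (S19.mem_cube.1 (hy (φ n)).1 i).1
      · refine le_of_tendsto_of_tendsto hyi
          (((hAi i).comp hφ.tendsto_atTop).add (hR.comp hφ.tendsto_atTop))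
          (Filter.Eventually.of_forall fun n => ?_)
        exact (S19.mem_cube.1 (hy (φ n)).1 i).2
    have hc3 : (S19.cube p.1 p.2 ∩ Fp).Nonempty := hlim Fp hFp fun n => (hxK n).2.2.1
    have hc4 : (S19.cube p.1 p.2 ∩ Fm).Nonempty := hlim Fm hFm fun n => (hxK n).2.2.2.1
    -- positive side length
    have hppos : 0 < p.2 := by
      obtain ⟨z, hzc, hzp⟩ := hc3
      obtain ⟨w, hwc, hwm⟩ := hc4
      exact lt_of_lt_of_le hδpos
        (le_trans (hδ z hzp w hwm) (S19.dist_le_of_mem_cube hc2 hzc hwc))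
    -- measure inequalities in the limit
    have hvol : ∀ S : Set (Fin d → ℝ),
        Filter.Tendsto (fun n => volume (S19.cube (x n).1 (x n).2 ∩ S)) Filter.atTop
          (nhds (volume (S19.cube p.1 p.2 ∩ S))) :=
      fun S => S19.tendsto_volume_cube_inter hppos (fun n => (hxK n).2.1) hA hR S
    have hc5 : ∀ S : Set (Fin d → ℝ),
        (∀ n, ENNReal.ofReal τ' * volume (S19.cube (x n).1 (x n).2 ∩ (Fp ∪ Fm)ᶜ) ≤
          volume (S19.cube (x n).1 (x n).2 ∩ S)) →
        ENNReal.ofReal τ' * volume (S19.cube p.1 p.2 ∩ (Fp ∪ Fm)ᶜ) ≤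
          volume (S19.cube p.1 p.2 ∩ S) := by
      intro S hin
      refine le_of_tendsto_of_tendsto
        (ENNReal.Tendsto.const_mul (hvol ((Fp ∪ Fm)ᶜ)) (Or.inr hτne))
        (hvol S) (Filter.Eventually.of_forall hin)
    exact ⟨hc1, hc2, hc3, hc4, hc5 Fp fun n => (hxK n).2.2.2.2.1,
      hc5 Fm fun n => (hxK n).2.2.2.2.2⟩
  -- K is compact
  have hKsub : K ⊆ (S19.cube q rQ) ×ˢ Set.Icc 0 rQ := by
    rintro p ⟨h1, h2, _⟩
    have i0 : Fin d := ⟨0, hd⟩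
    constructor
    · rw [S19.mem_cube]
      intro i
      exact ⟨(h1 i).1, by linarith [(h1 i).2, h2]⟩
    · exact ⟨h2, by linarith [(h1 i0).1, (h1 i0).2]⟩
  have hKcomp : IsCompact K :=
    ((S19.isCompact_cube q rQ).prod isCompact_Icc).of_isClosed_subset hKclosed hKsub
  -- minimize side length
  obtain ⟨⟨a, σ⟩, hmem, hmin⟩ :=
    hKcomp.exists_isMinOn ⟨(q, rQ), hKq⟩ continuous_snd.continuousOn
  have hminle : ∀ p ∈ K, σ ≤ p.2 := fun p hp => hmin hp
  have hσδ : δ ≤ σ := hδK _ hmem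
  have hσpos : 0 < σ := lt_of_lt_of_le hδpos hσδ
  obtain ⟨hcoord, hσ0, hnep, hnem, hip, him⟩ := hmem
  set V₀ := S19.cube a σ with hV₀
  have hV₀Q : V₀ ⊆ S19.cube q rQ := S19.cube_subset_cube hσ0 hcoord
  -- the complement inside V₀ has positive measure
  have hcpos : 0 < volume (V₀ ∩ (Fp ∪ Fm)ᶜ) := by
    rcases (show (0:ENNReal) ≤ volume (V₀ ∩ (Fp ∪ Fm)ᶜ) from zero_le).lt_or_eq with h | h
    · exact h
    · exfalso
      have hnull : volume ((V₀ \ Fp) \ Fm) = 0 := by rw [hdiffeq]; exact h.symm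
      rcases S19.cube_subset_of_null hσpos hFp.isClosed hFm.isClosed hdisj hnull with hsub | hsub
      · obtain ⟨z, hzc, hzm⟩ := hnem
        exact hdisj.ne_of_mem (hsub hzc) hzm rfl
      · obtain ⟨z, hzc, hzp⟩ := hnep
        exact hdisj.ne_of_mem hzp (hsub hzc) rfl
  have hppos' : 0 < volume (V₀ ∩ Fp) :=
    lt_of_lt_of_le (ENNReal.mul_pos hτpos.ne' hcpos.ne') hip
  have hmpos' : 0 < volume (V₀ ∩ Fm) :=
    lt_of_lt_of_le (ENNReal.mul_pos hτpos.ne' hcpos.ne') him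
  -- restricted sets
  set Fp' := Fp ∩ V₀ with hFp'
  set Fm' := Fm ∩ V₀ with hFm'
  have hsets : ∀ V : Set (Fin d → ℝ), V ⊆ V₀ →
      V ∩ Fp' = V ∩ Fp ∧ V ∩ Fm' = V ∩ Fm ∧ (V \ Fp') \ Fm' = (V \ Fp) \ Fm := by
    intro V hV
    refine ⟨?_, ?_, ?_⟩ <;> ext z <;>
      simp only [hFp', hFm', Set.mem_inter_iff, Set.mem_diff, Set.mem_inter_iff] <;>
      constructor <;> intro hz
    · exact ⟨hz.1, hz.2.1⟩
    · exact ⟨hz.1, hz.2, hV hz.1⟩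
    · exact ⟨hz.1, hz.2.1⟩
    · exact ⟨hz.1, hz.2, hV hz.1⟩
    · exact ⟨⟨hz.1.1, fun h => hz.1.2 ⟨h, hV hz.1.1⟩⟩, fun h => hz.2 ⟨h, hV hz.1.1⟩⟩
    · exact ⟨⟨hz.1.1, fun h => hz.1.2 h.1⟩, fun h => hz.2 h.1⟩
  obtain ⟨e1, e2, e3⟩ := hsets V₀ subset_rfl
  -- V₀ is τ'-minimal for the restricted sets
  have htm : IsTauMinimal τ' Fp' Fm' V₀ := by
    constructor
    · refine ⟨?_, ?_, ?_, ?_⟩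
      · rw [e1]; exact hppos'
      · rw [e2]; exact hmpos'
      · rw [e3, hdiffeq]; exact hcpos
      · rw [e1, e2, e3, hdiffeq]; exact le_min hip him
    · rintro V' ⟨a', r', hr', rfl⟩ hV'ss
      rw [show (Set.univ.pi fun i => Set.Icc (a' i) (a' i + r')) = S19.cube a' r' from rfl]
        at hV'ss ⊢
      obtain ⟨f1, f2, f3⟩ := hsets (S19.cube a' r') hV'ss.subset
      have hV'coord := (S19.subset_cube_iff hr'.le).1 (hV'ss.subset.trans hV₀Q)
      have hr'σ : r' < σ := by
        have h' := (S19.subset_cube_iff hr'.le).1 hV'ss.subset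
        have hle : r' ≤ σ := by
          have i0 : Fin d := ⟨0, hd⟩
          linarith [(h' i0).1, (h' i0).2]
        rcases hle.lt_or_eq with h | h
        · exact h
        · exfalso
          subst h
          exact hV'ss.ne (S19.cube_eq_of_subset hr'.le hV'ss.subset).2
      constructor
      · rintro ⟨hp, hm, hnull⟩
        rw [f2] at hm
        rw [f3] at hnull
        rcases S19.cube_subset_of_null hr' hFp.isClosed hFm.isClosed hdisj hnull
          with hsub | hsub
        · have : S19.cube a' r' ∩ Fm ⊆ (∅ : Set (Fin d → ℝ)) := by
            rw [← hdisj.inter_eq]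
            exact fun z hz => ⟨hsub hz.1, hz.2⟩
          exact absurd (measure_mono_null this measure_empty) hm.ne'
        · rw [f1] at hp
          have : S19.cube a' r' ∩ Fp ⊆ (∅ : Set (Fin d → ℝ)) := by
            rw [← hdisj.inter_eq]
            exact fun z hz => ⟨hz.2, hsub hz.1⟩
          exact absurd (measure_mono_null this measure_empty) hp.ne'
      · rintro ⟨hp, hm, hpos, hineq'⟩
        rw [f1] at hp
        rw [f2] at hm
        rw [f1, f2, f3, hdiffeq] at hineq'
        have hK' : (a', r') ∈ K := by
          refine ⟨hV'coord, hr'.le, S19.nonempty_of_vol_pos ?_, S19.nonempty_of_vol_pos ?_,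
            hineq'.trans (min_le_left _ _), hineq'.trans (min_le_right _ _)⟩
          · exact hp
          · exact hm
        exact absurd (hminle _ hK') (by simpa using hr'σ.not_ge)
  -- apply the hypothesis
  obtain ⟨W, hWcube, hWV₀, hWineq⟩ := hyp V₀ Fp' Fm' ⟨a, σ, hσpos, rfl⟩
    (hFp.inter_right (S19.isClosed_cube a σ)) (hFm.inter_right (S19.isClosed_cube a σ))
    Set.inter_subset_right Set.inter_subset_right
    (hdisj.mono Set.inter_subset_left Set.inter_subset_left)
    (S19.finiteUnion_inter_cube hFpU a σ) (S19.finiteUnion_inter_cube hFmU a σ) htm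
  obtain ⟨g1, g2, _⟩ := hsets W hWV₀
  refine ⟨W, hWcube, hWV₀.trans hV₀Q, ?_⟩
  rwa [g1, g2] at hWineq
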